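/- All complex roots of the polynomial g_s(z) = Σ_{0 ≤ k ≤ s/2} C(s-k, k) z^k are real and satisfy z ≤ -1/4. -/

import Mathlib

open Finset

private lemma g_rec (z : ℂ) (s : ℕ) :
    ∑ k ∈ Finset.range ((s + 2) / 2 + 1), (Nat.choose (s + 2 - k) k : ℂ) * z ^ k
      = (∑ k ∈ Finset.range ((s + 1) / 2 + 1), (Nat.choose (s + 1 - k) k : ℂ) * z ^ k)
        + z * ∑ k ∈ Finset.range (s / 2 + 1), (Nat.choose (s - k) k : ℂ) * z ^ k := by
  have hsub : Finset.range ((s + 1) / 2) ⊆ Finset.range (s / 2 + 1) :=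
    Finset.range_subset_range.mpr (by omega)
  have hext : ∑ j ∈ Finset.range ((s + 1) / 2), (Nat.choose (s - j) (j + 1) : ℂ) * z ^ (j + 1)
      = ∑ j ∈ Finset.range (s / 2 + 1), (Nat.choose (s - j) (j + 1) : ℂ) * z ^ (j + 1) := by
    refine Finset.sum_subset hsub ?_
    intro j _ hj2
    simp only [Finset.mem_range, not_lt] at hj2
    rw [Nat.choose_eq_zero_of_lt (by omega)]
    simp
  have eL : ∑ k ∈ Finset.range ((s + 2) / 2 + 1), (Nat.choose (s + 2 - k) k : ℂ) * z ^ k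
      = (∑ j ∈ Finset.range (s / 2 + 1), ((Nat.choose (s - j) j : ℂ) * z ^ (j + 1)
          + (Nat.choose (s - j) (j + 1) : ℂ) * z ^ (j + 1))) + 1 := by
    rw [show (s + 2) / 2 + 1 = (s / 2 + 1) + 1 from by omega, Finset.sum_range_succ']
    congr 1
    · apply Finset.sum_congr rfl
      intro j hj
      simp only [Finset.mem_range] at hj
      rw [show s + 2 - (j + 1) = (s - j) + 1 from by omega, Nat.choose_succ_succ]
      push_cast; ring
    · simp
  have eR : ∑ k ∈ Finset.range ((s + 1) / 2 + 1), (Nat.choose (s + 1 - k) k : ℂ) * z ^ k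
      = (∑ j ∈ Finset.range ((s + 1) / 2), (Nat.choose (s - j) (j + 1) : ℂ) * z ^ (j + 1)) + 1 := by
    rw [Finset.sum_range_succ']
    congr 1
    · apply Finset.sum_congr rfl
      intro j _
      rw [show s + 1 - (j + 1) = s - j from by omega]
    · simp
  have eM : z * ∑ k ∈ Finset.range (s / 2 + 1), (Nat.choose (s - k) k : ℂ) * z ^ k
      = ∑ j ∈ Finset.range (s / 2 + 1), (Nat.choose (s - j) j : ℂ) * z ^ (j + 1) := by
    rw [Finset.mul_sum]
    apply Finset.sum_congr rfl
    intro j _; ring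
  rw [eL, eR, eM, hext, Finset.sum_add_distrib]
  ring

private lemma g_closed (z α β : ℂ) (hsum : α + β = 1) (hprod : α * β = -z) :
    ∀ s : ℕ, (α - β) * ∑ k ∈ Finset.range (s / 2 + 1), (Nat.choose (s - k) k : ℂ) * z ^ k
      = α ^ (s + 1) - β ^ (s + 1) := by
  have hα : α ^ 2 = α + z := by linear_combination α * hsum - hprod
  have hβ : β ^ 2 = β + z := by linear_combination β * hsum - hprod
  intro s
  induction s using Nat.twoStepInduction with
  | zero => simp
  | one =>
    simp only [Nat.reduceDiv, zero_add, Finset.sum_range_one, Nat.sub_zero,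
      Nat.choose_zero_right, Nat.cast_one, pow_zero, mul_one]
    linear_combination hβ - hα
  | more s ih1 ih2 =>
    rw [g_rec]
    linear_combination ih2 + z * ih1 - α ^ (s + 1) * hα + β ^ (s + 1) * hβ

theorem g_s_roots_real_nonpositive (s : ℕ) (hs : 1 ≤ s) (z : ℂ)
    (hroot : ∑ k ∈ Finset.range (s / 2 + 1), (Nat.choose (s - k) k : ℂ) * z ^ k = 0) :
    z.im = 0 ∧ z.re ≤ -1/4 := by
  obtain ⟨w, hw⟩ : ∃ w : ℂ, w ^ 2 = 1 + 4 * z :=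
    ⟨(1 + 4 * z) ^ ((2 : ℕ)⁻¹ : ℂ), by
      exact_mod_cast Complex.cpow_nat_inv_pow (1 + 4 * z) (two_ne_zero)⟩
  by_cases hw0 : w = 0
  · have hz : z = -(1/4 : ℂ) := by
      rw [hw0] at hw
      linear_combination (-(1:ℂ)/4) * hw
    constructor
    · rw [hz]; norm_num
    · rw [hz]; norm_num
  · set α : ℂ := (1 + w) / 2 with hαdef
    set β : ℂ := (1 - w) / 2 with hβdef
    have hsum : α + β = 1 := by rw [hαdef, hβdef]; ring
    have hprod : α * β = -z := by
      rw [hαdef, hβdef]; linear_combination (-(1:ℂ)/4) * hw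
    have key := g_closed z α β hsum hprod s
    rw [hroot, mul_zero] at key
    have hpow : α ^ (s + 1) = β ^ (s + 1) := by linear_combination -key
    have habs : ‖1 + w‖ = ‖1 - w‖ := by
      have h1 : ‖α‖ ^ (s + 1) = ‖β‖ ^ (s + 1) := by
        rw [← norm_pow, ← norm_pow, hpow]
      have h2 : ‖α‖ = ‖β‖ :=
        (pow_left_inj₀ (norm_nonneg α) (norm_nonneg β)
          (Nat.succ_ne_zero s)).mp h1
      rw [hαdef, hβdef, norm_div, norm_div] at h2
      have h3 : ‖(2:ℂ)‖ ≠ 0 := by norm_num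
      field_simp at h2
      exact h2
    have hre : w.re = 0 := by
      have h2 : Complex.normSq (1 + w) = Complex.normSq (1 - w) := by
        rw [← Complex.sq_norm, ← Complex.sq_norm, habs]
      simp only [Complex.normSq_apply, Complex.add_re, Complex.add_im, Complex.sub_re,
        Complex.sub_im, Complex.one_re, Complex.one_im] at h2
      ring_nf at h2
      linarith
    have him : w.im ≠ 0 := fun h => hw0 (Complex.ext hre h)
    have hre2 : (w ^ 2).re = 1 + 4 * z.re := by rw [hw]; simp
    have him2 : (w ^ 2).im = 4 * z.im := by rw [hw]; simp
    rw [pow_two, Complex.mul_re, hre] at hre2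
    rw [pow_two, Complex.mul_im, hre] at him2
    constructor
    · simp at him2; linarith
    · nlinarith [sq_nonneg w.im, hre2]
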